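/- Let S ⊂ E with the affine spaces S_H (affine hull of the shifted points S̃ = {ã : a ∈ S}) and S_E = {x : d_a(x) = d_b(x) for all a,b ∈ S}. If x ∈ ℝ^d, y ∈ Ŝ (convex hull of S̃), z ∈ S_E with x = ½(y + z), and S_C = S_H ∩ S_E is a single point with S_H ⊥ S_E, then dist(x, S_H) = ½|z - S_C| and dist(x, S_E) = ½|y - S_C|. -/

import Mathlib

lemma infDist_eq_of_orth {d : ℕ}
    (s : AffineSubspace ℝ (EuclideanSpace ℝ (Fin d)))
    (p x : EuclideanSpace ℝ (Fin d)) (hp : p ∈ s)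
    (h : x - p ∈ s.directionᗮ) :
    Metric.infDist x (s : Set (EuclideanSpace ℝ (Fin d))) = ‖x - p‖ := by
  refine le_antisymm ?_ ?_
  · calc Metric.infDist x s ≤ dist x p := Metric.infDist_le_dist_of_mem hp
    _ = ‖x - p‖ := by rw [dist_eq_norm]
  · by_contra hlt
    push_neg at hlt
    obtain ⟨w, hw, hwd⟩ := (Metric.infDist_lt_iff ⟨p, hp⟩).mp hlt
    refine absurd hwd (not_lt.mpr ?_)
    have hmem : p - w ∈ s.direction := AffineSubspace.vsub_mem_direction hp hw
    have hinner : inner ℝ (x - p) (p - w) = (0 : ℝ) := real_inner_comm (p - w) (x - p) ▸ h _ hmem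
    have : x - w = (x - p) + (p - w) := by abel
    rw [dist_eq_norm, this]
    have hsq : ‖(x - p) + (p - w)‖ ^ 2 = ‖x - p‖ ^ 2 + ‖p - w‖ ^ 2 := by
      rw [norm_add_sq_real, hinner]; ring
    nlinarith [norm_nonneg ((x - p) + (p - w)), norm_nonneg (x - p), norm_nonneg (p - w),
      sq_nonneg ‖p - w‖]

/-- Distances from `x = ½(y+z)` to the orthogonal complementary affine subspaces
`S_H` and `S_E` through `S_C`. -/
theorem dist_to_orthogonal_affine_subspaces {d : ℕ}
    (SH SE : AffineSubspace ℝ (EuclideanSpace ℝ (Fin d)))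
    (Stil : Set (EuclideanSpace ℝ (Fin d)))
    (hspan : SH = affineSpan ℝ Stil)
    (SC x y z : EuclideanSpace ℝ (Fin d))
    (hSCH : SC ∈ SH) (hSCE : SC ∈ SE)
    (hdir : SE.direction = (SH.direction)ᗮ)
    (hy : y ∈ convexHull ℝ Stil) (hz : z ∈ SE)
    (hx : x = (2 : ℝ)⁻¹ • (y + z)) :
    Metric.infDist x (SH : Set (EuclideanSpace ℝ (Fin d))) = ‖z - SC‖ / 2 ∧
    Metric.infDist x (SE : Set (EuclideanSpace ℝ (Fin d))) = ‖y - SC‖ / 2 := by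
  have hyH : y ∈ SH := by
    rw [hspan]
    exact convexHull_subset_affineSpan Stil hy
  have hyd : y - SC ∈ SH.direction := AffineSubspace.vsub_mem_direction hyH hSCH
  have hzd : z - SC ∈ SE.direction := AffineSubspace.vsub_mem_direction hz hSCE
  have hzd' : z - SC ∈ SH.directionᗮ := hdir ▸ hzd
  have hnorm : ∀ v : EuclideanSpace ℝ (Fin d), ‖(2:ℝ)⁻¹ • v‖ = ‖v‖ / 2 := by
    intro v
    rw [norm_smul, Real.norm_eq_abs]
    norm_num [div_eq_mul_inv, mul_comm]
  constructor
  · have hp1 : (2:ℝ)⁻¹ • (y - SC) +ᵥ SC ∈ SH :=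
      AffineSubspace.vadd_mem_of_mem_direction (Submodule.smul_mem _ _ hyd) hSCH
    have hdiff : x - ((2:ℝ)⁻¹ • (y - SC) +ᵥ SC) = (2:ℝ)⁻¹ • (z - SC) := by
      simp only [hx, vadd_eq_add, smul_sub, smul_add]
      module
    rw [infDist_eq_of_orth SH _ x hp1 (hdiff ▸ Submodule.smul_mem _ _ hzd'), hdiff, hnorm]
  · have hp2 : (2:ℝ)⁻¹ • (z - SC) +ᵥ SC ∈ SE :=
      AffineSubspace.vadd_mem_of_mem_direction (Submodule.smul_mem _ _ hzd) hSCE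
    have hdiff : x - ((2:ℝ)⁻¹ • (z - SC) +ᵥ SC) = (2:ℝ)⁻¹ • (y - SC) := by
      simp only [hx, vadd_eq_add, smul_sub, smul_add]
      module
    have hyd' : y - SC ∈ SE.directionᗮ := by
      rw [hdir, Submodule.orthogonal_orthogonal]
      exact hyd
    rw [infDist_eq_of_orth SE _ x hp2 (hdiff ▸ Submodule.smul_mem _ _ hyd'), hdiff, hnorm]
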